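/- arXiv:1309.3720 — 2 statements merged into one kernel-verified Lean document; each statement's English description precedes it below -/
import Mathlib

section
/- Auto-correlation of chirps: for every a,b ∈ ℤ_N, the ambiguity function A(C_{L_{a,b}}, C_{L_{a,b}})[v] equals e(bτ) if v = (τ, aτ) lies on the line L_a, and equals 0 if v ∉ L_a. -/
open Finset

/-- `e(t) = exp(2πit/N)` on `ℤ/N`. -/
noncomputable def eN (N : ℕ) [NeZero N] (t : ZMod N) : ℂ :=
  Complex.exp (2 * Real.pi * Complex.I * (t.val : ℂ) / N)

/-- Heisenberg operator `π(τ,ω)`. -/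
noncomputable def heis (N : ℕ) [NeZero N] (τ ω : ZMod N) (f : ZMod N → ℂ) : ZMod N → ℂ :=
  fun n => eN N (-(2⁻¹ * τ * ω)) * eN N (ω * n) * f (n - τ)

/-- Standard inner product on sequences. -/
noncomputable def inn (N : ℕ) [NeZero N] (f g : ZMod N → ℂ) : ℂ :=
  ∑ n : ZMod N, f n * (starRingEnd ℂ) (g n)

/-- Ambiguity function `A(f,g)[v] = ⟨π(v)f, g⟩`. -/
noncomputable def amb (N : ℕ) [NeZero N] (f g : ZMod N → ℂ) (v : ZMod N × ZMod N) : ℂ :=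
  inn N (heis N v.1 v.2 f) g

/-- Chirp sequence `C_{L_{a,b}}[n] = e(2⁻¹ a n² − b n)/√N`. -/
noncomputable def chirp (N : ℕ) [NeZero N] (a b : ZMod N) : ZMod N → ℂ :=
  fun n => eN N (2⁻¹ * a * n ^ 2 - b * n) / (Real.sqrt N : ℂ)

/-- Dirac delta sequence supported at `b`. -/
def deltaSeq (N : ℕ) (b : ZMod N) : ZMod N → ℂ :=
  fun n => if n = b then 1 else 0

/-- Channel operator `H(S)[n] = Σ_k α_k e(ω_k n) S[n−τ_k]`. -/
noncomputable def chanOp (N : ℕ) [NeZero N] (r : ℕ) (α : Fin r → ℂ)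
    (tw : Fin r → ZMod N × ZMod N) (S : ZMod N → ℂ) : ZMod N → ℂ :=
  fun n => ∑ k : Fin r, α k * eN N ((tw k).2 * n) * S (n - (tw k).1)


lemma eN_eq_stdAddChar (N : ℕ) [NeZero N] (t : ZMod N) :
    eN N t = ZMod.stdAddChar t := by
  rw [ZMod.stdAddChar_apply, ZMod.toCircle_apply, eN]

lemma eN_add (N : ℕ) [NeZero N] (s t : ZMod N) :
    eN N (s + t) = eN N s * eN N t := by
  simp [eN_eq_stdAddChar, AddChar.map_add_eq_mul]

lemma eN_zero (N : ℕ) [NeZero N] : eN N 0 = 1 := by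
  simp [eN_eq_stdAddChar]

lemma eN_conj (N : ℕ) [NeZero N] (t : ZMod N) :
    (starRingEnd ℂ) (eN N t) = eN N (-t) := by
  rw [eN, ← Complex.exp_conj]
  simp only [map_div₀, map_mul, Complex.conj_I, Complex.conj_ofReal, map_natCast, map_ofNat]
  rw [show 2 * (Real.pi : ℂ) * (-Complex.I) * ((t.val : ℂ)) / N
      = -(2 * (Real.pi : ℂ) * Complex.I * (t.val : ℂ) / N) by ring, Complex.exp_neg, ← eN]
  exact (eq_inv_of_mul_eq_one_left (by rw [← eN_add]; simp [eN_zero])).symm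

lemma sum_eN (N : ℕ) [NeZero N] (hN : N.Prime) (c : ZMod N) :
    ∑ n : ZMod N, eN N (c * n) = if c = 0 then (N : ℂ) else 0 := by
  haveI := Fact.mk hN
  simp_rw [eN_eq_stdAddChar, mul_comm c]
  rw [AddChar.sum_mulShift c (ZMod.isPrimitive_stdAddChar N)]
  simp [ZMod.card]

lemma two_ne_zero_zmod (N : ℕ) [NeZero N] (hN : N.Prime) (hodd : Odd N) :
    (2 : ZMod N) ≠ 0 := by
  intro h
  rw [show (2 : ZMod N) = ((2 : ℕ) : ZMod N) by norm_num,
    ZMod.natCast_eq_zero_iff] at h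
  have := (Nat.prime_dvd_prime_iff_eq hN Nat.prime_two).mp h
  rw [this] at hodd
  simp [Nat.odd_iff] at hodd

lemma amb_chirp_eq (N : ℕ) [NeZero N] (hN : N.Prime) (hodd : Odd N)
    (a b : ZMod N) (v : ZMod N × ZMod N) :
    amb N (chirp N a b) (chirp N a b) v =
      (if v.2 - a * v.1 = 0 then (N : ℂ) else 0) *
        eN N (2⁻¹ * a * v.1 * v.1 - 2⁻¹ * v.1 * v.2 + b * v.1) / N := by
  haveI := Fact.mk hN
  obtain ⟨τ, ω⟩ := v
  have h2 : (2⁻¹ : ZMod N) * 2 = 1 := inv_mul_cancel₀ (two_ne_zero_zmod N hN hodd)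
  have hs : (Real.sqrt N : ℂ) * (Real.sqrt N : ℂ) = (N : ℂ) := by
    rw [← Complex.ofReal_mul, Real.mul_self_sqrt (Nat.cast_nonneg N)]
    push_cast; ring
  rw [amb, inn]
  have step : ∀ n : ZMod N,
      heis N (τ, ω).1 (τ, ω).2 (chirp N a b) n * (starRingEnd ℂ) (chirp N a b n) =
      eN N ((ω - a * τ) * n) * eN N (2⁻¹ * a * τ * τ - 2⁻¹ * τ * ω + b * τ) / N := by
    intro n
    simp only [heis, chirp]
    simp only [map_div₀, eN_conj, Complex.conj_ofReal]
    rw [show eN N (-(2⁻¹ * τ * ω)) * eN N (ω * n) *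
          (eN N (2⁻¹ * a * (n - τ) ^ 2 - b * (n - τ)) / (Real.sqrt N : ℂ)) *
          (eN N (-(2⁻¹ * a * n ^ 2 - b * n)) / (Real.sqrt N : ℂ)) =
        eN N (-(2⁻¹ * τ * ω)) * eN N (ω * n) *
          eN N (2⁻¹ * a * (n - τ) ^ 2 - b * (n - τ)) *
          eN N (-(2⁻¹ * a * n ^ 2 - b * n)) / ((Real.sqrt N : ℂ) * (Real.sqrt N : ℂ)) by ring,
      hs, ← eN_add, ← eN_add, ← eN_add]
    congr 2
    rw [← eN_add]
    congr 1
    linear_combination (-(a * τ * n)) * h2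
  rw [Finset.sum_congr rfl (fun n _ => step n)]
  rw [← Finset.sum_div, ← Finset.sum_mul, sum_eN N hN]

theorem chirp_autocorrelation (N : ℕ) [NeZero N] (hN : N.Prime) (hodd : Odd N)
    (a b : ZMod N) :
    (∀ τ : ZMod N, amb N (chirp N a b) (chirp N a b) (τ, a * τ) = eN N (b * τ)) ∧
    (∀ v : ZMod N × ZMod N, v.2 ≠ a * v.1 → amb N (chirp N a b) (chirp N a b) v = 0) := by
  have hN0 : (N : ℂ) ≠ 0 := Nat.cast_ne_zero.mpr (NeZero.ne N)
  constructor
  · intro τ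
    rw [amb_chirp_eq N hN hodd a b (τ, a * τ)]
    simp only [sub_self, if_pos rfl]
    rw [show (2⁻¹ : ZMod N) * a * (τ, a * τ).1 * (τ, a * τ).1 -
        2⁻¹ * (τ, a * τ).1 * (τ, a * τ).2 + b * (τ, a * τ).1 = b * τ by ring]
    field_simp
    rw [if_pos trivial, mul_comm]
  · intro v hv
    rw [amb_chirp_eq N hN hodd a b v, if_neg (by simpa [sub_eq_zero] using hv)]
    simp
end

section
/- Perfectness probability: Let v_1,…,v_r be distinct points of V generic with respect to three distinct lines L, M, M°. The probability (over uniformly random choice of distinct lines L, M, M° among lines through the origin, conditioned on genericity) that {v_1,…,v_r} is perfect with respect to L, M, M° is at least 1 − r(r²−r)/N. -/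
/-- The shifted line (coset) `K + u`. -/
def shiftedLine (N : ℕ) (K : Submodule (ZMod N) (ZMod N × ZMod N))
    (u : ZMod N × ZMod N) : Set (ZMod N × ZMod N) :=
  {x | x - u ∈ K}

/-- The family of shifted lines `{v_i + K : i, K ∈ Ls}`. -/
def lineFamily (N : ℕ) {r : ℕ} (v : Fin r → ZMod N × ZMod N)
    (Ls : Set (Submodule (ZMod N) (ZMod N × ZMod N))) : Set (Set (ZMod N × ZMod N)) :=
  {C | ∃ i K, K ∈ Ls ∧ C = shiftedLine N K (v i)}

/-- Incidence number of `x`: the number of shifted lines of the family containing `x`. -/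
noncomputable def incNum (N : ℕ) {r : ℕ} (v : Fin r → ZMod N × ZMod N)
    (Ls : Set (Submodule (ZMod N) (ZMod N × ZMod N))) (x : ZMod N × ZMod N) : ℕ :=
  Set.ncard {C ∈ lineFamily N v Ls | x ∈ C}

/-- Perfectness of `{v_1,…,v_r}` w.r.t. a collection of `d` lines. -/
def Perfect' (N : ℕ) {r : ℕ} (v : Fin r → ZMod N × ZMod N)
    (Ls : Set (Submodule (ZMod N) (ZMod N × ZMod N))) (d : ℕ) : Prop :=
  ∀ x : ZMod N × ZMod N, incNum N v Ls x = d → ∃ i, x = v i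

/-- Triples of pairwise distinct lines w.r.t. each of which `v` is generic. -/
def genericTriples (N : ℕ) {r : ℕ} (v : Fin r → ZMod N × ZMod N) :
    Set (Submodule (ZMod N) (ZMod N × ZMod N) × Submodule (ZMod N) (ZMod N × ZMod N)
          × Submodule (ZMod N) (ZMod N × ZMod N)) :=
  {t | (Module.finrank (ZMod N) t.1 = 1 ∧ Module.finrank (ZMod N) t.2.1 = 1 ∧
          Module.finrank (ZMod N) t.2.2 = 1) ∧
       (t.1 ≠ t.2.1 ∧ t.1 ≠ t.2.2 ∧ t.2.1 ≠ t.2.2) ∧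
       (∀ i j, i ≠ j → v i - v j ∉ t.1 ∧ v i - v j ∉ t.2.1 ∧ v i - v j ∉ t.2.2)}

section AuxPerfect

open Module Submodule

variable {N : ℕ} [Fact N.Prime]

lemma aux_span_eq (K : Submodule (ZMod N) (ZMod N × ZMod N))
    (hK : finrank (ZMod N) K = 1) {w : ZMod N × ZMod N} (hw : w ≠ 0) (hm : w ∈ K) :
    K = span (ZMod N) {w} := by
  refine (Submodule.eq_of_le_of_finrank_le ((span_singleton_le_iff_mem w K).2 hm) ?_).symm
  rw [hK, finrank_span_singleton hw]

lemma aux_line_eq {K K' : Submodule (ZMod N) (ZMod N × ZMod N)}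
    (hK : finrank (ZMod N) K = 1) (hK' : finrank (ZMod N) K' = 1)
    {w : ZMod N × ZMod N} (hw : w ≠ 0) (h1 : w ∈ K) (h2 : w ∈ K') : K = K' :=
  (aux_span_eq K hK hw h1).trans (aux_span_eq K' hK' hw h2).symm

lemma aux_shift {K : Submodule (ZMod N) (ZMod N × ZMod N)} {u x : ZMod N × ZMod N}
    (h : x - u ∈ K) : shiftedLine N K u = shiftedLine N K x := by
  ext y
  simp only [shiftedLine, Set.mem_setOf_eq]
  constructor
  · intro hy; have := K.sub_mem hy h; simpa using this
  · intro hy; have := K.add_mem hy h; simpa using this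

lemma aux_witness {r : ℕ} (v : Fin r → ZMod N × ZMod N)
    {L M M' : Submodule (ZMod N) (ZMod N × ZMod N)}
    (hL : finrank (ZMod N) L = 1) (hM : finrank (ZMod N) M = 1)
    (hM' : finrank (ZMod N) M' = 1)
    (hLM : L ≠ M) (hLM' : L ≠ M') (hMM' : M ≠ M')
    {x : ZMod N × ZMod N}
    (hinc : incNum N v ({L, M, M'} : Set _) x = 3) (hx : ∀ i, x ≠ v i) :
    ∃ i j k, i ≠ j ∧ i ≠ k ∧ j ≠ k ∧ x - v i ∈ L ∧ x - v j ∈ M ∧ x - v k ∈ M' := by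
  classical
  set Ls : Set (Submodule (ZMod N) (ZMod N × ZMod N)) := {L, M, M'} with hLs
  set Ls' : Set (Submodule (ZMod N) (ZMod N × ZMod N)) :=
    {K ∈ Ls | ∃ i, x - v i ∈ K} with hLs'
  have hLsfin : Ls.Finite := (Set.finite_singleton M').insert M |>.insert L
  have hsub : Ls' ⊆ Ls := fun K hK => hK.1
  have hLs'fin : Ls'.Finite := hLsfin.subset hsub
  have hT : {C ∈ lineFamily N v Ls | x ∈ C} ⊆ (fun K => shiftedLine N K x) '' Ls' := by
    rintro C ⟨⟨i, K, hKLs, rfl⟩, hxC⟩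
    have hxm : x - v i ∈ K := hxC
    exact ⟨K, ⟨hKLs, i, hxm⟩, (aux_shift hxm).symm⟩
  have h3 : 3 ≤ Ls'.ncard := by
    have h1 : Set.ncard {C ∈ lineFamily N v Ls | x ∈ C}
        ≤ Set.ncard ((fun K => shiftedLine N K x) '' Ls') :=
      Set.ncard_le_ncard hT (hLs'fin.image _)
    have h2 : Set.ncard ((fun K => shiftedLine N K x) '' Ls') ≤ Ls'.ncard :=
      Set.ncard_image_le hLs'fin
    have := hinc
    rw [incNum] at this
    omega
  have hcard : Ls.ncard ≤ 3 := by
    calc Ls.ncard ≤ ({M, M'} : Set _).ncard + 1 := Set.ncard_insert_le _ _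
    _ ≤ (({M'} : Set _).ncard + 1) + 1 := by
        have := Set.ncard_insert_le M ({M'} : Set (Submodule (ZMod N) (ZMod N × ZMod N)))
        omega
    _ ≤ 3 := by rw [Set.ncard_singleton]
  have heq : Ls' = Ls := Set.eq_of_subset_of_ncard_le hsub (le_trans hcard h3) hLsfin
  have hLmem : L ∈ Ls' := heq ▸ (Set.mem_insert _ _)
  have hMmem : M ∈ Ls' := heq ▸ (Set.mem_insert_of_mem _ (Set.mem_insert _ _))
  have hM'mem : M' ∈ Ls' := heq ▸ (Set.mem_insert_of_mem _ (Set.mem_insert_of_mem _ rfl))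
  obtain ⟨i, hi⟩ := hLmem.2
  obtain ⟨j, hj⟩ := hMmem.2
  obtain ⟨k, hk⟩ := hM'mem.2
  refine ⟨i, j, k, ?_, ?_, ?_, hi, hj, hk⟩
  · rintro rfl; exact hLM (aux_line_eq hL hM (sub_ne_zero.2 (hx i)) hi hj)
  · rintro rfl; exact hLM' (aux_line_eq hL hM' (sub_ne_zero.2 (hx i)) hi hk)
  · rintro rfl; exact hMM' (aux_line_eq hM hM' (sub_ne_zero.2 (hx j)) hj hk)

lemma aux_lines_count {r : ℕ} (v : Fin r → ZMod N × ZMod N) (hv : Function.Injective v) :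
    N + 1 ≤ {K : Submodule (ZMod N) (ZMod N × ZMod N) |
      finrank (ZMod N) K = 1 ∧ ∀ i j, i ≠ j → v i - v j ∉ K}.ncard + r * r := by
  classical
  set Gd := {K : Submodule (ZMod N) (ZMod N × ZMod N) |
      finrank (ZMod N) K = 1 ∧ ∀ i j, i ≠ j → v i - v j ∉ K} with hGL
  set AllL := {K : Submodule (ZMod N) (ZMod N × ZMod N) | finrank (ZMod N) K = 1} with hA
  have hAfin : AllL.Finite := Set.toFinite _
  have hinj : Function.Injective
      (fun a : ZMod N => span (ZMod N) {((1 : ZMod N), a)}) := by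
    intro a b hab
    dsimp only at hab
    have : ((1 : ZMod N), b) ∈ span (ZMod N) {((1 : ZMod N), a)} := by
      rw [hab]; exact mem_span_singleton_self _
    rw [mem_span_singleton] at this
    obtain ⟨c, hc⟩ := this
    rw [Prod.ext_iff] at hc
    simp only [Prod.smul_fst, Prod.smul_snd, smul_eq_mul, mul_one] at hc
    rw [← hc.2, hc.1, one_mul]
  have hsub1 : insert (span (ZMod N) {((0 : ZMod N), (1 : ZMod N))})
      ((fun a : ZMod N => span (ZMod N) {((1 : ZMod N), a)}) '' Set.univ) ⊆ AllL := by
    rintro K (rfl | ⟨a, -, rfl⟩)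
    · exact finrank_span_singleton (by simp)
    · exact finrank_span_singleton (by simp)
  have hnotmem : span (ZMod N) {((0 : ZMod N), (1 : ZMod N))} ∉
      ((fun a : ZMod N => span (ZMod N) {((1 : ZMod N), a)}) '' Set.univ) := by
    rintro ⟨a, -, ha⟩
    dsimp only at ha
    have : ((1 : ZMod N), a) ∈ span (ZMod N) {((0 : ZMod N), (1 : ZMod N))} := by
      rw [← ha]; exact mem_span_singleton_self _
    rw [mem_span_singleton] at this
    obtain ⟨c, hc⟩ := this
    rw [Prod.ext_iff] at hc
    simp only [Prod.smul_fst, smul_eq_mul, mul_zero] at hc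
    exact zero_ne_one hc.1
  have hAcard : N + 1 ≤ AllL.ncard := by
    have h1 : (insert (span (ZMod N) {((0 : ZMod N), (1 : ZMod N))})
        ((fun a : ZMod N => span (ZMod N) {((1 : ZMod N), a)}) '' Set.univ)).ncard
        = N + 1 := by
      rw [Set.ncard_insert_of_notMem hnotmem (Set.toFinite _),
        Set.ncard_image_of_injective _ hinj, Set.ncard_univ, Nat.card_zmod]
    calc N + 1 = _ := h1.symm
    _ ≤ AllL.ncard := Set.ncard_le_ncard hsub1 hAfin
  have hbad : AllL \ Gd ⊆
      (fun p : Fin r × Fin r => span (ZMod N) {v p.1 - v p.2}) '' Set.univ := by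
    rintro K ⟨hK1, hK2⟩
    simp only [hGL, Set.mem_setOf_eq, not_and, not_forall] at hK2
    obtain ⟨i, j, hij, hmem⟩ := hK2 hK1
    rw [not_not] at hmem
    refine ⟨(i, j), Set.mem_univ _, ?_⟩
    exact (aux_span_eq K hK1 (sub_ne_zero.2 fun h => hij (hv h)) hmem).symm
  have hbadcard : (AllL \ Gd).ncard ≤ r * r := by
    calc (AllL \ Gd).ncard ≤ _ := Set.ncard_le_ncard hbad (Set.toFinite _)
    _ ≤ (Set.univ : Set (Fin r × Fin r)).ncard := Set.ncard_image_le (Set.toFinite _)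
    _ = r * r := by rw [Set.ncard_univ]; simp
  have hGLsub : Gd ⊆ AllL := fun K hK => hK.1
  have hunion : AllL.ncard ≤ Gd.ncard + (AllL \ Gd).ncard := by
    rw [← Set.ncard_union_eq (Set.disjoint_sdiff_right) (hAfin.subset hGLsub)
      (hAfin.diff)]
    exact Set.ncard_le_ncard (fun K hK => by
      by_cases h : K ∈ Gd
      · exact Set.mem_union_left _ h
      · exact Set.mem_union_right _ ⟨hK, h⟩) ((hAfin.subset hGLsub).union (hAfin.diff))
  omega

end AuxPerfect

def mkEmb3 {α : Type*} (a b c : α) (hab : a ≠ b) (hac : a ≠ c) (hbc : b ≠ c) :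
    Fin 3 ↪ α :=
  ⟨![a, b, c], by
    intro u w h
    fin_cases u <;> fin_cases w <;> simp_all⟩

def mkEmb2 {α : Type*} (a b : α) (hab : a ≠ b) : Fin 2 ↪ α :=
  ⟨![a, b], by
    intro u w h
    fin_cases u <;> fin_cases w <;> simp_all⟩

@[simp] lemma mkEmb3_0 {α : Type*} (a b c : α) h1 h2 h3 : mkEmb3 a b c h1 h2 h3 0 = a := rfl
@[simp] lemma mkEmb3_1 {α : Type*} (a b c : α) h1 h2 h3 : mkEmb3 a b c h1 h2 h3 1 = b := rfl
@[simp] lemma mkEmb3_2 {α : Type*} (a b c : α) h1 h2 h3 : mkEmb3 a b c h1 h2 h3 2 = c := rfl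
@[simp] lemma mkEmb2_0 {α : Type*} (a b : α) h1 : mkEmb2 a b h1 0 = a := rfl
@[simp] lemma mkEmb2_1 {α : Type*} (a b : α) h1 : mkEmb2 a b h1 1 = b := rfl

lemma card_distinct_triples {α : Type*} (s : Set α) (hs : s.Finite) :
    {t : α × α × α | (t.1 ∈ s ∧ t.2.1 ∈ s ∧ t.2.2 ∈ s) ∧
      t.1 ≠ t.2.1 ∧ t.1 ≠ t.2.2 ∧ t.2.1 ≠ t.2.2}.ncard
      = s.ncard * (s.ncard - 1) * (s.ncard - 2) := by
  classical
  have e : {t : α × α × α | (t.1 ∈ s ∧ t.2.1 ∈ s ∧ t.2.2 ∈ s) ∧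
      t.1 ≠ t.2.1 ∧ t.1 ≠ t.2.2 ∧ t.2.1 ≠ t.2.2} ≃ (Fin 3 ↪ s) :=
    { toFun := fun t => mkEmb3 (⟨t.1.1, t.2.1.1⟩ : s) ⟨t.1.2.1, t.2.1.2.1⟩ ⟨t.1.2.2, t.2.1.2.2⟩
        (by simp [Subtype.ext_iff, t.2.2.1]) (by simp [Subtype.ext_iff, t.2.2.2.1])
        (by simp [Subtype.ext_iff, t.2.2.2.2])
      invFun := fun f => ⟨((f 0 : α), (f 1 : α), (f 2 : α)),
        ⟨(f 0).2, (f 1).2, (f 2).2⟩,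
        fun h => (by decide : (0 : Fin 3) ≠ 1) (f.injective (Subtype.ext h)),
        fun h => (by decide : (0 : Fin 3) ≠ 2) (f.injective (Subtype.ext h)),
        fun h => (by decide : (1 : Fin 3) ≠ 2) (f.injective (Subtype.ext h))⟩
      left_inv := fun t => rfl
      right_inv := fun f => by
        ext i : 1
        fin_cases i <;> rfl }
  have h1 : Nat.card {t : α × α × α | (t.1 ∈ s ∧ t.2.1 ∈ s ∧ t.2.2 ∈ s) ∧
      t.1 ≠ t.2.1 ∧ t.1 ≠ t.2.2 ∧ t.2.1 ≠ t.2.2} = Nat.card (Fin 3 ↪ s) :=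
    Nat.card_congr e
  haveI : Fintype s := hs.fintype
  rw [Nat.card_coe_set_eq] at h1
  rw [h1, Nat.card_eq_fintype_card, Fintype.card_embedding_eq, Fintype.card_fin]
  have hc : Fintype.card s = s.ncard := by
    rw [Set.ncard_eq_toFinset_card', Set.toFinset_card]
  rw [hc]
  simp [Nat.descFactorial]
  ring

lemma nat_sq_sub (n : ℕ) : n * n - n = n * (n - 1) := by
  cases n with
  | zero => rfl
  | succ m =>
      have : (m + 1) * (m + 1) = (m + 1) * m + (m + 1) := by ring
      simp only [Nat.succ_sub_one]
      omega

theorem perfectness_probability (N r : ℕ) (hN : N.Prime) (hodd : Odd N)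
    (v : Fin r → ZMod N × ZMod N) (hv : Function.Injective v) :
    (1 - (r * ((r : ℚ) ^ 2 - r)) / N) * (Set.ncard (genericTriples N v) : ℚ)
      ≤ (Set.ncard {t ∈ genericTriples N v |
          Perfect' N v ({t.1, t.2.1, t.2.2} : Set _) 3} : ℚ) := by
  classical
  haveI : Fact N.Prime := ⟨hN⟩
  haveI : Finite (Submodule (ZMod N) (ZMod N × ZMod N)) :=
    Finite.of_injective _ SetLike.coe_injective
  set Gd := {K : Submodule (ZMod N) (ZMod N × ZMod N) |
      Module.finrank (ZMod N) K = 1 ∧ ∀ i j, i ≠ j → v i - v j ∉ K} with hGd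
  set g := Gd.ncard with hg
  -- characterization of genericTriples
  have hchar : genericTriples N v = {t : _ × _ × _ |
      (t.1 ∈ Gd ∧ t.2.1 ∈ Gd ∧ t.2.2 ∈ Gd) ∧
      t.1 ≠ t.2.1 ∧ t.1 ≠ t.2.2 ∧ t.2.1 ≠ t.2.2} := by
    ext t
    simp only [genericTriples, hGd, Set.mem_setOf_eq]
    constructor
    · rintro ⟨⟨h1, h2, h3⟩, hd, hgen⟩
      exact ⟨⟨⟨h1, fun i j hij => (hgen i j hij).1⟩, ⟨h2, fun i j hij => (hgen i j hij).2.1⟩,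
        ⟨h3, fun i j hij => (hgen i j hij).2.2⟩⟩, hd⟩
    · rintro ⟨⟨⟨h1, hg1⟩, ⟨h2, hg2⟩, ⟨h3, hg3⟩⟩, hd⟩
      exact ⟨⟨h1, h2, h3⟩, hd, fun i j hij => ⟨hg1 i j hij, hg2 i j hij, hg3 i j hij⟩⟩
  have hGcount : (genericTriples N v).ncard = g * (g - 1) * (g - 2) := by
    rw [hchar]; exact card_distinct_triples Gd (Set.toFinite _)
  -- partition into perfect and bad
  set Ps := {t ∈ genericTriples N v | Perfect' N v ({t.1, t.2.1, t.2.2} : Set _) 3} with hPs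
  set B := {t ∈ genericTriples N v | ¬ Perfect' N v ({t.1, t.2.1, t.2.2} : Set _) 3} with hB
  have hsplit : (genericTriples N v).ncard = Ps.ncard + B.ncard := by
    rw [← Set.ncard_union_eq (by
        rw [Set.disjoint_left]
        intro t ht ht'
        rw [hPs, Set.mem_sep_iff] at ht
        rw [hB, Set.mem_sep_iff] at ht'
        exact ht'.2 ht.2)
      (Set.toFinite _) (Set.toFinite _)]
    congr 1
    ext t
    simp only [hPs, hB, Set.mem_union, Set.mem_sep_iff]
    tauto
  -- bound on bad set
  have key : ∀ t : ↥B, ∃ w : (ZMod N × ZMod N) × Fin r × Fin r × Fin r,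
      (∀ i, w.1 ≠ v i) ∧ (w.2.1 ≠ w.2.2.1 ∧ w.2.1 ≠ w.2.2.2 ∧ w.2.2.1 ≠ w.2.2.2) ∧
      w.1 - v w.2.1 ∈ t.1.1 ∧ w.1 - v w.2.2.1 ∈ t.1.2.1 ∧ w.1 - v w.2.2.2 ∈ t.1.2.2 := by
    rintro ⟨t, ht⟩
    have htg := And.left ht
    have htp := And.right ht
    simp only [genericTriples, Set.mem_setOf_eq] at htg
    rw [Perfect'] at htp
    push_neg at htp
    obtain ⟨x, hinc, hx⟩ := htp
    obtain ⟨⟨h1, h2, h3⟩, ⟨hd1, hd2, hd3⟩, -⟩ := htg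
    have hx' : ∀ i, x ≠ v i := fun i h => hx i h
    obtain ⟨i, j, k, hij, hik, hjk, hmi, hmj, hmk⟩ :=
      aux_witness v h1 h2 h3 hd1 hd2 hd3 hinc hx'
    exact ⟨⟨x, i, j, k⟩, hx', ⟨hij, hik, hjk⟩, hmi, hmj, hmk⟩
  choose w hw using key
  have hBfinrank : ∀ t : ↥B, t.1 ∈ genericTriples N v := fun t => And.left t.2
  have hBmem : ∀ t : ↥B, t.1.1 ∈ Gd ∧ t.1.2.1 ∈ Gd ∧ t.1.2.2 ∈ Gd := by
    intro t
    have h := hBfinrank t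
    rw [hchar] at h
    exact (And.left h)
  have hBne : ∀ t : ↥B, t.1.1 ≠ t.1.2.1 := by
    intro t
    have h := hBfinrank t
    rw [hchar] at h
    exact (And.left (And.right h))
  set F : ↥B → (Fin 3 ↪ Fin r) × (Fin 2 ↪ ↥Gd) := fun t =>
    (mkEmb3 (w t).2.1 (w t).2.2.1 (w t).2.2.2 (hw t).2.1.1 (hw t).2.1.2.1 (hw t).2.1.2.2,
     mkEmb2 (⟨t.1.1, (hBmem t).1⟩ : ↥Gd) ⟨t.1.2.1, (hBmem t).2.1⟩
       (fun h => hBne t (congrArg Subtype.val h))) with hF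
  have hFinj : Function.Injective F := by
    intro t t' hFt
    rw [hF] at hFt
    have h1 := congrArg Prod.fst hFt
    have h2 := congrArg Prod.snd hFt
    simp only at h1 h2
    have hi : (w t).2.1 = (w t').2.1 := by
      have := DFunLike.congr_fun h1 (0 : Fin 3); simpa using this
    have hj : (w t).2.2.1 = (w t').2.2.1 := by
      have := DFunLike.congr_fun h1 (1 : Fin 3); simpa using this
    have hk : (w t).2.2.2 = (w t').2.2.2 := by
      have := DFunLike.congr_fun h1 (2 : Fin 3); simpa using this
    have hL : t.1.1 = t'.1.1 := by
      have := DFunLike.congr_fun h2 (0 : Fin 2)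
      simpa [Subtype.ext_iff] using this
    have hM : t.1.2.1 = t'.1.2.1 := by
      have := DFunLike.congr_fun h2 (1 : Fin 2)
      simpa [Subtype.ext_iff] using this
    obtain ⟨hx1, -, hm1, hm2, hm3⟩ := hw t
    obtain ⟨hx1', -, hm1', hm2', hm3'⟩ := hw t'
    -- show the incidence points agree
    have hxx : (w t).1 = (w t').1 := by
      by_contra hne
      have hsub1 : (w t).1 - (w t').1 ∈ t.1.1 := by
        have h1' : (w t').1 - v ((w t).2.1) ∈ t.1.1 := by rw [hL, hi]; exact hm1'
        have := Submodule.sub_mem _ hm1 h1'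
        simpa using this
      have hsub2 : (w t).1 - (w t').1 ∈ t.1.2.1 := by
        have h2' : (w t').1 - v ((w t).2.2.1) ∈ t.1.2.1 := by rw [hM, hj]; exact hm2'
        have := Submodule.sub_mem _ hm2 h2'
        simpa using this
      have hr := hBfinrank t
      simp only [genericTriples, Set.mem_setOf_eq] at hr
      obtain ⟨⟨hr1, hr2, -⟩, -, -⟩ := hr
      exact hBne t (aux_line_eq hr1 hr2 (sub_ne_zero.2 hne) hsub1 hsub2)
    have hM' : t.1.2.2 = t'.1.2.2 := by
      have hr := hBfinrank t
      simp only [genericTriples, Set.mem_setOf_eq] at hr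
      obtain ⟨⟨-, -, hr3⟩, -, -⟩ := hr
      have hr' := hBfinrank t'
      simp only [genericTriples, Set.mem_setOf_eq] at hr'
      obtain ⟨⟨-, -, hr3'⟩, -, -⟩ := hr'
      have hm3'' : (w t).1 - v ((w t).2.2.2) ∈ t'.1.2.2 := by
        rw [hxx, hk]; exact hm3'
      exact aux_line_eq hr3 hr3' (sub_ne_zero.2 (hx1 _)) hm3 hm3''
    apply Subtype.ext
    exact Prod.ext hL (Prod.ext hM hM')
  have hBcard : B.ncard ≤ r * (r - 1) * (r - 2) * (g * (g - 1)) := by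
    have hcb : Nat.card ↥B ≤ Nat.card ((Fin 3 ↪ Fin r) × (Fin 2 ↪ ↥Gd)) :=
      Nat.card_le_card_of_injective F hFinj
    rw [Nat.card_coe_set_eq] at hcb
    haveI : Fintype ↥Gd := Fintype.ofFinite _
    rw [Nat.card_prod, Nat.card_eq_fintype_card, Nat.card_eq_fintype_card,
      Fintype.card_embedding_eq, Fintype.card_embedding_eq, Fintype.card_fin,
      Fintype.card_fin, Fintype.card_fin] at hcb
    have hcg : Fintype.card ↥Gd = g := by
      rw [hg, Set.ncard_eq_toFinset_card', Set.toFinset_card]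
    rw [hcg] at hcb
    calc B.ncard ≤ r.descFactorial 3 * g.descFactorial 2 := hcb
    _ = r * (r - 1) * (r - 2) * (g * (g - 1)) := by
        simp [Nat.descFactorial]; ring
  have hglow : N + 1 ≤ g + r * r := aux_lines_count v hv
  -- final arithmetic
  have hNpos : 0 < N := hN.pos
  set G := (genericTriples N v).ncard with hGdef
  set P := Ps.ncard with hPdef
  by_cases hbig : (1 - (r * ((r : ℚ) ^ 2 - r)) / N) ≤ 0
  · calc (1 - (r * ((r : ℚ) ^ 2 - r)) / N) * G ≤ 0 :=
        mul_nonpos_of_nonpos_of_nonneg hbig (Nat.cast_nonneg _)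
    _ ≤ P := Nat.cast_nonneg _
  · push_neg at hbig
    have hrr : r ≤ r * r := by
      rcases Nat.eq_zero_or_pos r with h | h
      · simp [h]
      · calc r = r * 1 := (Nat.mul_one r).symm
        _ ≤ r * r := Nat.mul_le_mul_left r h
    have hqlt : r * (r * r - r) < N := by
      by_contra hq
      push_neg at hq
      have hcast : (N : ℚ) ≤ (r * (r * r - r) : ℕ) := by exact_mod_cast hq
      rw [Nat.cast_mul, Nat.cast_sub hrr] at hcast
      push_cast at hcast
      have hNQ : (0 : ℚ) < N := by exact_mod_cast hNpos
      have : (1 : ℚ) ≤ (r * ((r : ℚ) ^ 2 - r)) / N := by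
        rw [le_div_iff₀ hNQ, one_mul]
        calc (N : ℚ) ≤ r * ((r : ℚ) * r - r) := hcast
        _ = r * ((r : ℚ) ^ 2 - r) := by ring
      linarith
    -- the key natural-number inequality
    have hkey : N * B.ncard ≤ r * (r * r - r) * G := by
      rcases Nat.lt_or_ge r 3 with hr3 | hr3
      · have : B.ncard = 0 := by
          have h0 : r - 2 = 0 := by omega
          have := hBcard
          rw [h0] at this
          simpa using this
        simp [this]
      rcases Nat.lt_or_ge g 3 with hg3 | hg3
      · have hG0 : G = 0 := by
          rw [hGcount]
          have : g - 2 = 0 := by omega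
          rw [this, Nat.mul_zero]
        have : B.ncard = 0 := by omega
        simp [this]
      -- main case
      obtain ⟨a, rfl⟩ : ∃ a, r = a + 3 := ⟨r - 3, by omega⟩
      obtain ⟨b, hb⟩ : ∃ b, g = b + 3 := ⟨g - 3, by omega⟩
      have hcore : N * ((a + 3) - 2) ≤ (a + 3) * (g - 2) := by
        rw [hb]
        have e1 : (a + 3) - 2 = a + 1 := by omega
        have e2 : (b + 3) - 2 = b + 1 := by omega
        rw [e1, e2]
        have hq' : (a + 3) * ((a + 3) * (a + 2)) < N := by
          have := hqlt
          rw [nat_sq_sub] at this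
          have e3 : (a + 3) - 1 = a + 2 := by omega
          rw [e3] at this
          exact this
        have hglow' : N + 1 ≤ b + 3 + (a + 3) * (a + 3) := by rw [hb] at hglow; omega
        nlinarith
      rw [hGcount, nat_sq_sub]
      calc N * B.ncard ≤ N * ((a + 3) * ((a + 3) - 1) * ((a + 3) - 2) * (g * (g - 1))) :=
            Nat.mul_le_mul_left _ hBcard
      _ = (N * ((a + 3) - 2)) * ((a + 3) * ((a + 3) - 1) * (g * (g - 1))) := by ring
      _ ≤ ((a + 3) * (g - 2)) * ((a + 3) * ((a + 3) - 1) * (g * (g - 1))) :=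
            Nat.mul_le_mul_right _ hcore
      _ = (a + 3) * ((a + 3) * ((a + 3) - 1)) * (g * (g - 1) * (g - 2)) := by ring
    -- transfer to ℚ
    have hNQ : (0 : ℚ) < N := by exact_mod_cast hNpos
    have hkeyQ : (N : ℚ) * B.ncard ≤ r * ((r : ℚ) ^ 2 - r) * G := by
      have := hkey
      have hcast : ((N * B.ncard : ℕ) : ℚ) ≤ ((r * (r * r - r) * G : ℕ) : ℚ) := by
        exact_mod_cast this
      rw [Nat.cast_mul, Nat.cast_mul, Nat.cast_mul, Nat.cast_sub hrr] at hcast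
      push_cast at hcast
      calc (N : ℚ) * B.ncard = (N : ℚ) * B.ncard := rfl
      _ ≤ (r : ℚ) * ((r : ℚ) * r - r) * G := hcast
      _ = r * ((r : ℚ) ^ 2 - r) * G := by ring
    have hGQ : (G : ℚ) = P + B.ncard := by exact_mod_cast hsplit
    have hdiv : (B.ncard : ℚ) ≤ r * ((r : ℚ) ^ 2 - r) * G / N := by
      rw [le_div_iff₀ hNQ]
      linarith [hkeyQ]
    have hexp : (1 - (r * ((r : ℚ) ^ 2 - r)) / N) * G
        = (G : ℚ) - r * ((r : ℚ) ^ 2 - r) * G / N := by ring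
    rw [hexp]
    linarith [hdiv, hGQ.ge]
end
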